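/- For every h ∈ SL₂(ℝ), the matrix ι(h) preserves the quadratic form Q₀(x,y,z) = x² + y² − z², i.e., Q₀(v·ι(h)) = Q₀(v) for all v ∈ ℝ³. -/
import Mathlib


open Matrix MeasureTheory Set Pointwise
open scoped ENNReal

noncomputable def iota (h : Matrix (Fin 2) (Fin 2) ℝ) : Matrix (Fin 3) (Fin 3) ℝ :=
  let a := h 0 0; let b := h 0 1; let c := h 1 0; let d := h 1 1
  !![(a^2-b^2-c^2+d^2)/2, a*c-b*d, (a^2-b^2+c^2-d^2)/2;
     a*b-c*d, b*c+a*d, a*b+c*d;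
     (a^2+b^2-c^2-d^2)/2, a*c+b*d, (a^2+b^2+c^2+d^2)/2]

noncomputable def Q0 (v : Fin 3 → ℝ) : ℝ := v 0 ^ 2 + v 1 ^ 2 - v 2 ^ 2

/-- ι(h) preserves the quadratic form Q₀(x,y,z) = x² + y² − z². -/
theorem iota_preserves_Q0 (h : Matrix (Fin 2) (Fin 2) ℝ) (hh : h.det = 1)
    (v : Fin 3 → ℝ) : Q0 (v ᵥ* iota h) = Q0 v := by
  have hd : h 0 0 * h 1 1 - h 0 1 * h 1 0 = 1 := by
    rw [Matrix.det_fin_two] at hh; linarith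
  simp only [Q0, iota, vecMul, dotProduct, Fin.sum_univ_three]
  simp [Matrix.cons_val_zero, Matrix.cons_val_one]
  linear_combination ((h 0 0 * h 1 1 - h 0 1 * h 1 0 + 1) * (v 0 ^ 2 + v 1 ^ 2 - v 2 ^ 2)) * hd
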